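/- Let 0 ≤ x ≤ y ≤ 1 with x + y ≥ 1 and y > 0, and let Q be the convex hull of the points (0,1), (0,0), (1,0), (x,y). Let Λ be the lattice generated by the vectors ((x-1)/(2y), 1) and (1 - (1-x)/(2y), 1/2). Then the translates {Q + v : v ∈ Λ} have pairwise disjoint interiors, i.e., they form a packing of the plane. -/

import Mathlib

set_option maxHeartbeats 1000000

lemma hull_le (α β c : ℝ) (S : Set (ℝ × ℝ)) (h : ∀ p ∈ S, α * p.1 + β * p.2 ≤ c) :
    ∀ p ∈ convexHull ℝ S, α * p.1 + β * p.2 ≤ c := by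
  have hconv : Convex ℝ {p : ℝ × ℝ | α * p.1 + β * p.2 ≤ c} := by
    intro p hp q hq s t hs ht hst
    simp only [Set.mem_setOf_eq] at *
    have e1 : (s • p + t • q).1 = s * p.1 + t * q.1 := rfl
    have e2 : (s • p + t • q).2 = s * p.2 + t * q.2 := rfl
    rw [e1, e2]
    have hc : s * c + t * c = c := by rw [← add_mul, hst, one_mul]
    linarith [mul_le_mul_of_nonneg_left hp hs, mul_le_mul_of_nonneg_left hq ht]
  exact fun p hp => convexHull_min h hconv hp

lemma hs_disjoint (α β c : ℝ) (h : 0 < α ^ 2 + β ^ 2) (A B : Set (ℝ × ℝ))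
    (hA : ∀ p ∈ A, α * p.1 + β * p.2 ≤ c) (hB : ∀ p ∈ B, c ≤ α * p.1 + β * p.2) :
    Disjoint (interior A) (interior B) := by
  rw [Set.disjoint_left]
  intro p hpA hpB
  obtain ⟨ε, hε, hball⟩ := Metric.isOpen_iff.mp isOpen_interior p hpA
  have hle : α * p.1 + β * p.2 ≤ c := hA p (interior_subset hpA)
  have hge : c ≤ α * p.1 + β * p.2 := hB p (interior_subset hpB)
  have hden : (0:ℝ) < 2 * (|α| + |β| + 1) := by positivity
  set δ : ℝ := ε / (2 * (|α| + |β| + 1)) with hδdef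
  have hδ : 0 < δ := div_pos hε hden
  have hδe : δ * (|α| + |β| + 1) = ε / 2 := by
    rw [hδdef]; field_simp
  have hq : ((p.1 + δ * α, p.2 + δ * β) : ℝ × ℝ) ∈ Metric.ball p ε := by
    rw [Metric.mem_ball, Prod.dist_eq]
    have h1 : dist (p.1 + δ * α) p.1 = δ * |α| := by
      rw [Real.dist_eq]
      rw [show p.1 + δ * α - p.1 = δ * α by ring, abs_mul, abs_of_pos hδ]
    have h2 : dist (p.2 + δ * β) p.2 = δ * |β| := by
      rw [Real.dist_eq]
      rw [show p.2 + δ * β - p.2 = δ * β by ring, abs_mul, abs_of_pos hδ]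
    rw [h1, h2]
    have ha : δ * |α| < ε := by nlinarith [abs_nonneg α, abs_nonneg β]
    have hb : δ * |β| < ε := by nlinarith [abs_nonneg α, abs_nonneg β]
    exact max_lt ha hb
  have hAq := hA _ (interior_subset (hball hq))
  simp only at hAq
  nlinarith [sq_abs α, sq_abs β]


lemma key (x y : ℝ) (hx0 : 0 ≤ x) (hxy : x ≤ y) (hy1 : y ≤ 1) (hsum : 1 ≤ x + y)
    (hy0 : 0 < y) (a b : ℤ) (hab : ¬(a = 0 ∧ b = 0)) (hn : 0 ≤ 2 * a + b) :
    ∃ α β c : ℝ, 0 < α ^ 2 + β ^ 2 ∧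
      (∀ p ∈ ({(0,1), (0,0), (1,0), (x,y)} : Set (ℝ × ℝ)), α * p.1 + β * p.2 ≤ c) ∧
      (∀ p ∈ ({(0,1), (0,0), (1,0), (x,y)} : Set (ℝ × ℝ)),
        c ≤ α * p.1 + β * p.2 +
          (α * ((b : ℝ) - ((a : ℝ) + (b : ℝ)) * ((1 - x) / (2 * y))) +
            β * ((a : ℝ) + (b : ℝ) / 2))) := by
  set W : ℝ := (1 - x) / (2 * y) with hWdef
  have hx1 : x ≤ 1 := le_trans hxy hy1
  have hW0 : 0 ≤ W := by
    rw [hWdef]; apply div_nonneg <;> linarith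
  have hW2 : W ≤ 1/2 := by
    rw [hWdef, div_le_iff₀ (by linarith : (0:ℝ) < 2 * y)]; linarith
  have hyW : y * W = (1 - x) / 2 := by
    rw [hWdef]; field_simp
  rcases le_or_gt 2 (2 * a + b) with h2 | h2
  · -- n ≥ 2 : horizontal strip separation
    have hn2 : (2:ℝ) ≤ 2 * (a:ℝ) + (b:ℝ) := by exact_mod_cast h2
    refine ⟨0, 1, 1, by norm_num, ?_, ?_⟩ <;>
    · rintro p hp
      simp only [Set.mem_insert_iff, Set.mem_singleton_iff] at hp
      rcases hp with rfl | rfl | rfl | rfl <;> simp <;> linarith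
  · have hcase : 2 * a + b = 0 ∨ 2 * a + b = 1 := by omega
    rcases hcase with hc0 | hc1
    · -- n = 0, b = -2a, a ≠ 0
      have hb : b = -(2 * a) := by omega
      subst hb
      rcases le_or_gt 1 a with ha | ha
      · -- a ≥ 1
        have haR : (1:ℝ) ≤ (a:ℝ) := by exact_mod_cast ha
        refine ⟨-1, 0, 0, by norm_num, ?_, ?_⟩ <;>
        · rintro p hp
          simp only [Set.mem_insert_iff, Set.mem_singleton_iff] at hp
          rcases hp with rfl | rfl | rfl | rfl <;> push_cast <;>
            linarith [mul_nonneg (by linarith : (0:ℝ) ≤ (a:ℝ) - 1) (by linarith : (0:ℝ) ≤ 2 - W)]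
      · -- a ≤ -1
        have ha' : a ≤ -1 := by omega
        have haR : (a:ℝ) ≤ -1 := by exact_mod_cast ha'
        refine ⟨1, 0, 1, by norm_num, ?_, ?_⟩ <;>
        · rintro p hp
          simp only [Set.mem_insert_iff, Set.mem_singleton_iff] at hp
          rcases hp with rfl | rfl | rfl | rfl <;> push_cast <;>
            linarith [mul_nonneg (by linarith : (0:ℝ) ≤ -(a:ℝ) - 1) (by linarith : (0:ℝ) ≤ 2 - W)]
    · -- n = 1, b = 1 - 2a
      have hb : b = 1 - 2 * a := by omega
      subst hb
      rcases lt_trichotomy a 0 with ha | ha | ha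
      · -- a ≤ -1
        have haR : (a:ℝ) ≤ -1 := by exact_mod_cast (by omega : a ≤ -1)
        refine ⟨1, 0, 1, by norm_num, ?_, ?_⟩ <;>
        · rintro p hp
          simp only [Set.mem_insert_iff, Set.mem_singleton_iff] at hp
          rcases hp with rfl | rfl | rfl | rfl <;> push_cast <;>
            linarith [mul_nonneg (by linarith : (0:ℝ) ≤ 1 - (a:ℝ)) (by linarith : (0:ℝ) ≤ 1/2 - W)]
      · -- a = 0 : slanted edge separation
        subst ha
        refine ⟨y, 1 - x, y, by nlinarith, ?_, ?_⟩ <;>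
        · rintro p hp
          simp only [Set.mem_insert_iff, Set.mem_singleton_iff] at hp
          rcases hp with rfl | rfl | rfl | rfl <;> push_cast <;>
            linarith [hyW, mul_nonneg (hy0.le) hx0, mul_nonneg (by linarith : (0:ℝ) ≤ 1 - x) hy0.le]
      · -- a ≥ 1
        have haR : (1:ℝ) ≤ (a:ℝ) := by exact_mod_cast ha
        refine ⟨-1, 0, 0, by norm_num, ?_, ?_⟩ <;>
        · rintro p hp
          simp only [Set.mem_insert_iff, Set.mem_singleton_iff] at hp
          rcases hp with rfl | rfl | rfl | rfl <;> push_cast <;>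
            linarith [mul_nonneg (by linarith : (0:ℝ) ≤ (a:ℝ) - 1) (by linarith : (0:ℝ) ≤ 2 - W)]

theorem stmt_17 (x y : ℝ) (hx0 : 0 ≤ x) (hxy : x ≤ y) (hy1 : y ≤ 1) (hsum : 1 ≤ x + y)
    (hy0 : 0 < y) :
    let Q : Set (ℝ × ℝ) := convexHull ℝ {(0,1), (0,0), (1,0), (x,y)}
    let v₁ : ℝ × ℝ := ((x-1)/(2*y), 1)
    let v₂ : ℝ × ℝ := (1 - (1-x)/(2*y), 1/2)
    ∀ k₁ k₂ m₁ m₂ : ℤ, (k₁, k₂) ≠ (m₁, m₂) →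
      Disjoint (interior ((fun p => p + (k₁ • v₁ + k₂ • v₂)) '' Q))
               (interior ((fun p => p + (m₁ • v₁ + m₂ • v₂)) '' Q)) := by
  intro Q v₁ v₂
  have hy2 : (2 : ℝ) * y ≠ 0 := by positivity
  have main : ∀ k₁ k₂ m₁ m₂ : ℤ, ¬(m₁ - k₁ = 0 ∧ m₂ - k₂ = 0) →
      0 ≤ 2 * (m₁ - k₁) + (m₂ - k₂) →
      Disjoint (interior ((fun p => p + (k₁ • v₁ + k₂ • v₂)) '' Q))
               (interior ((fun p => p + (m₁ • v₁ + m₂ • v₂)) '' Q)) := by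
    intro k₁ k₂ m₁ m₂ hab hn
    obtain ⟨α, β, c, hpos, h1, h2⟩ :=
      key x y hx0 hxy hy1 hsum hy0 (m₁ - k₁) (m₂ - k₂) hab hn
    set t₁ : ℝ × ℝ := k₁ • v₁ + k₂ • v₂ with ht₁
    set t₂ : ℝ × ℝ := m₁ • v₁ + m₂ • v₂ with ht₂
    have hv11 : v₁.1 = (x-1)/(2*y) := rfl
    have hv12 : v₁.2 = 1 := rfl
    have hv21 : v₂.1 = 1 - (1-x)/(2*y) := rfl
    have hv22 : v₂.2 = (1:ℝ)/2 := rfl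
    have ht11 : t₁.1 = (k₁ : ℝ) * ((x-1)/(2*y)) + (k₂ : ℝ) * (1 - (1-x)/(2*y)) := by
      rw [ht₁]; simp [Prod.fst_add, Prod.smul_fst, zsmul_eq_mul, hv11, hv21]
    have ht12 : t₁.2 = (k₁ : ℝ) + (k₂ : ℝ) * (1/2) := by
      rw [ht₁]; simp [Prod.snd_add, Prod.smul_snd, zsmul_eq_mul, hv12, hv22]
    have ht21 : t₂.1 = (m₁ : ℝ) * ((x-1)/(2*y)) + (m₂ : ℝ) * (1 - (1-x)/(2*y)) := by
      rw [ht₂]; simp [Prod.fst_add, Prod.smul_fst, zsmul_eq_mul, hv11, hv21]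
    have ht22 : t₂.2 = (m₁ : ℝ) + (m₂ : ℝ) * (1/2) := by
      rw [ht₂]; simp [Prod.snd_add, Prod.smul_snd, zsmul_eq_mul, hv12, hv22]
    have hF : α * t₂.1 + β * t₂.2 = α * t₁.1 + β * t₁.2 +
        (α * ((((m₂ - k₂) : ℤ) : ℝ) -
            ((((m₁ - k₁) : ℤ) : ℝ) + (((m₂ - k₂) : ℤ) : ℝ)) * ((1 - x) / (2 * y))) +
          β * ((((m₁ - k₁) : ℤ) : ℝ) + (((m₂ - k₂) : ℤ) : ℝ) / 2)) := by
      rw [ht11, ht12, ht21, ht22]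
      push_cast
      field_simp
      ring
    apply hs_disjoint α β (c + (α * t₁.1 + β * t₁.2)) hpos
    · rintro q ⟨p, hp, rfl⟩
      have hple := hull_le α β c _ h1 p hp
      have e1 : (p + t₁).1 = p.1 + t₁.1 := rfl
      have e2 : (p + t₁).2 = p.2 + t₁.2 := rfl
      rw [e1, e2]; linarith
    · rintro q ⟨p, hp, rfl⟩
      have hple := hull_le (-α) (-β)
        (-(c - (α * ((((m₂ - k₂) : ℤ) : ℝ) -
            ((((m₁ - k₁) : ℤ) : ℝ) + (((m₂ - k₂) : ℤ) : ℝ)) * ((1 - x) / (2 * y))) +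
          β * ((((m₁ - k₁) : ℤ) : ℝ) + (((m₂ - k₂) : ℤ) : ℝ) / 2)))) _
        (by intro p hp; have := h2 p hp; simp only [neg_mul]; linarith) p hp
      have e1 : (p + t₂).1 = p.1 + t₂.1 := rfl
      have e2 : (p + t₂).2 = p.2 + t₂.2 := rfl
      rw [e1, e2]; linarith
  intro k₁ k₂ m₁ m₂ hne
  have hne' : ¬(m₁ - k₁ = 0 ∧ m₂ - k₂ = 0) := by
    simp only [ne_eq, Prod.mk.injEq] at hne; omega
  rcases le_or_gt 0 (2 * (m₁ - k₁) + (m₂ - k₂)) with h | h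
  · exact main k₁ k₂ m₁ m₂ hne' h
  · exact (main m₁ m₂ k₁ k₂ (by omega) (by omega)).symm
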